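/- arXiv:1710.11268 — 2 statements merged into one kernel-verified Lean document; each statement's English description precedes it below -/
import Mathlib

section
/- Fix a constant c₀ ∈ (0,1). There exists a constant c ∈ (0, 1/2) such that for all p, q with 0 < c₀·p < q < p ≤ 1/2 and p − q ≥ q/10, the quantity λ = log((1-q)/(1-p)) / log(p(1-q)/(q(1-p))) satisfies (λ − q)/(p − q) ≥ c. -/
lemma log_le_half_sub_inv {x : ℝ} (hx : 1 ≤ x) : Real.log x ≤ (x - x⁻¹) / 2 := by
  have hx0 : 0 < x := by linarith
  have hl : 0 ≤ Real.log x := Real.log_nonneg hx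
  have h2 : Real.log x ≤ Real.sinh (Real.log x) := Real.self_le_sinh_iff.mpr hl
  rw [Real.sinh_eq, Real.exp_log hx0, Real.exp_neg, Real.exp_log hx0] at h2
  linarith

set_option maxHeartbeats 1000000 in
/-- Fix `c₀ ∈ (0,1)`. There exists `c ∈ (0, 1/2)` such that for all `p, q` with
`0 < c₀ p < q < p ≤ 1/2` and `p − q ≥ q/10`, the threshold
`λ = log((1-q)/(1-p)) / log(p(1-q)/(q(1-p)))` satisfies `(λ − q)/(p − q) ≥ c`. -/
theorem lambda_ratio_lower_bound (c₀ : ℝ) (hc₀0 : 0 < c₀) (hc₀1 : c₀ < 1) :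
    ∃ c : ℝ, 0 < c ∧ c < 1/2 ∧
      ∀ p q : ℝ, 0 < c₀ * p → c₀ * p < q → q < p → p ≤ 1/2 → q / 10 ≤ p - q →
        c ≤ (Real.log ((1 - q) / (1 - p)) / Real.log (p * (1 - q) / (q * (1 - p))) - q)
              / (p - q) := by
  refine ⟨c₀ / (2 + 2 * c₀), by positivity, ?_, ?_⟩
  · rw [div_lt_div_iff₀ (by linarith) (by norm_num)]
    linarith
  intro p q hcp hq hqp hp2 _
  obtain ⟨cc, hccdef⟩ : ∃ x : ℝ, x = c₀ / (2 + 2 * c₀) := ⟨_, rfl⟩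
  rw [← hccdef]
  have hq0 : 0 < q := lt_trans hcp hq
  have hp0 : 0 < p := hq0.trans hqp
  have hp1 : (0:ℝ) < 1 - p := by linarith
  have hq1 : (0:ℝ) < 1 - q := by linarith
  obtain ⟨N, hNdef⟩ : ∃ x : ℝ, x = Real.log ((1 - q) / (1 - p)) := ⟨_, rfl⟩
  obtain ⟨L, hLdef⟩ : ∃ x : ℝ, x = Real.log (p / q) := ⟨_, rfl⟩
  rw [← hNdef]
  -- split the denominator log
  have hsplit : Real.log (p * (1 - q) / (q * (1 - p))) = L + N := by
    rw [show p * (1 - q) / (q * (1 - p)) = (p / q) * ((1 - q) / (1 - p)) by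
      field_simp]
    rw [Real.log_mul (by positivity) (by positivity), ← hNdef, ← hLdef]
  -- lower bound on N
  have hNeq : N = - Real.log ((1 - p) / (1 - q)) := by
    rw [hNdef, ← Real.log_inv]
    congr 1
    field_simp
  have hN1 : p - q ≤ (1 - q) * N := by
    have h := Real.log_le_sub_one_of_pos (show (0:ℝ) < (1 - p) / (1 - q) by positivity)
    have h2 : 1 - (1 - p) / (1 - q) ≤ N := by rw [hNeq]; linarith
    have h3 : (1 - q) * (1 - (1 - p) / (1 - q)) = p - q := by field_simp; ring
    nlinarith [mul_le_mul_of_nonneg_left h2 hq1.le]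
  have hN0 : 0 < N := by nlinarith
  -- upper bound on N
  have hN2' : N ≤ 2 * (p - q) := by
    have h := Real.log_le_sub_one_of_pos (show (0:ℝ) < (1 - q) / (1 - p) by positivity)
    rw [← hNdef] at h
    have h2 : N * (1 - p) ≤ ((1 - q) / (1 - p) - 1) * (1 - p) :=
      mul_le_mul_of_nonneg_right h (le_of_lt hp1)
    have h3 : ((1 - q) / (1 - p) - 1) * (1 - p) = p - q := by field_simp; ring
    rw [h3] at h2
    nlinarith
  -- bounds on L
  have hL0 : 0 ≤ L := by
    rw [hLdef]
    exact Real.log_nonneg (by rw [le_div_iff₀ hq0]; linarith)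
  have hL1 : 2 * p * q * L ≤ (p - q) * (p + q) := by
    have h := log_le_half_sub_inv (show (1:ℝ) ≤ p / q by rw [le_div_iff₀ hq0]; linarith)
    rw [← hLdef] at h
    have h2 : L * (2 * p * q) ≤ (p / q - (p / q)⁻¹) / 2 * (2 * p * q) :=
      mul_le_mul_of_nonneg_right h (by positivity)
    have h3 : (p / q - (p / q)⁻¹) / 2 * (2 * p * q) = (p - q) * (p + q) := by
      field_simp
      ring
    rw [h3] at h2
    linarith
  have hB0 : 0 < L + N := by linarith
  -- key constant inequality: cc * (2p(1+2q)) ≤ q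
  have hcc0 : 0 ≤ cc := by rw [hccdef]; positivity
  have hc' : cc * (2 * p * (1 + 2 * q)) ≤ q := by
    rw [hccdef, div_mul_eq_mul_div, div_le_iff₀ (by linarith)]
    nlinarith [mul_nonneg (mul_nonneg hc₀0.le hq0.le) (by linarith : (0:ℝ) ≤ 1 - 2 * p)]
  -- q(L+N) ≤ (p-q)(1+2q)
  have hqL : q * L ≤ p - q := by nlinarith
  have hqLN : q * (L + N) ≤ (p - q) * (1 + 2 * q) := by nlinarith
  -- the gap: (p-q)^2 ≤ 2p(N - qN - qL)
  have hgap : (p - q) ^ 2 ≤ 2 * p * (N - q * N - q * L) := by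
    nlinarith [mul_le_mul_of_nonneg_left hN1 (by positivity : (0:ℝ) ≤ 2 * p), hL1]
  -- cc*(p-q)*(L+N) ≤ N - qN - qL
  have h5 : 2 * p * (cc * (L + N)) ≤ p - q := by
    have hprod := mul_le_mul hc' hqLN (mul_nonneg hq0.le hB0.le) hq0.le
    have hpos : (0:ℝ) < q * (1 + 2 * q) := by nlinarith
    rw [← mul_le_mul_iff_right₀ hpos]
    nlinarith [hprod]
  have hcterm : cc * (p - q) * (L + N) ≤ N - q * N - q * L := by
    have h6 := mul_le_mul_of_nonneg_right h5 (by linarith : (0:ℝ) ≤ p - q)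
    have hpos : (0:ℝ) < 2 * p := by linarith
    rw [← mul_le_mul_iff_right₀ hpos]
    nlinarith [h6, hgap]
  -- finish
  rw [hsplit, le_div_iff₀ (by linarith : (0:ℝ) < p - q)]
  have hfin : (cc * (p - q) + q) * (L + N) ≤ N := by nlinarith [hcterm]
  have h6 : cc * (p - q) + q ≤ N / (L + N) := by
    rw [le_div_iff₀ hB0]; exact hfin
  linarith
end

section
/- Let A ∈ {0,1}^{n×n} be symmetric with zero diagonal and independent Bernoulli above-diagonal entries, and let p ≥ max_{i,j} E A_{i,j}. Define S = {i : Σ_j A_{i,j} ≥ 20np} and Z_i = (Σ_j |A_{i,j} − E A_{i,j}|)·𝟙{i ∈ S}. Then E Z_i ≤ 20np·exp(−10np) for each i, and with probability at least 1 − exp(−5np), Σ_i Z_i ≤ 20n²p·exp(−5np). -/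
open MeasureTheory ProbabilityTheory

lemma iIndepFun_precomp {Ω ι ι' : Type*} {mΩ : MeasurableSpace Ω} {μ : Measure Ω}
    {f : ι → Ω → ℝ} (hf : iIndepFun f μ)
    {g : ι' → ι} (hg : Function.Injective g) :
    iIndepFun (fun i => f (g i)) μ := by
  classical
  rw [iIndepFun_iff_measure_inter_preimage_eq_mul] at hf ⊢
  intro S sets hsets
  have hFmeas : ∀ i, i ∈ S.image g →
      MeasurableSet (⋂ j ∈ S.filter (fun j => g j = i), sets j) := by
    intro i _
    exact MeasurableSet.biInter (Finset.countable_toSet _)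
      (fun j hj => hsets j (Finset.mem_filter.mp hj).1)
  have key := hf (S.image g) (sets := fun i => ⋂ j ∈ S.filter (fun j => g j = i), sets j) hFmeas
  have hFeq : ∀ j ∈ S, (⋂ j' ∈ S.filter (fun j' => g j' = g j), sets j') = sets j := by
    intro j hj
    have : S.filter (fun j' => g j' = g j) = {j} := by
      ext j'
      simp only [Finset.mem_filter, Finset.mem_singleton]
      constructor
      · rintro ⟨-, h⟩; exact hg h
      · rintro rfl; exact ⟨hj, rfl⟩
    rw [this]
    simp
  rw [show (⋂ i ∈ S.image g, f i ⁻¹' ⋂ j ∈ S.filter (fun j => g j = i), sets j)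
      = ⋂ j ∈ S, f (g j) ⁻¹' sets j by
    rw [Finset.set_biInter_finset_image]
    exact Set.iInter₂_congr fun j hj => by rw [hFeq j hj],
    Finset.prod_image (fun a _ b _ h => hg h)] at key
  rw [key]
  exact Finset.prod_congr rfl fun j hj => by beta_reduce; rw [hFeq j hj]

set_option maxHeartbeats 1000000 in
/-- For a symmetric binary random matrix `A` with zero diagonal and independent
Bernoulli above-diagonal entries, `p ≥ max_{i,j} 𝔼A_{i,j}`, `S = {i : ∑ⱼ A_{i,j} ≥ 20np}`
and `Zᵢ = (∑ⱼ |A_{i,j} − 𝔼A_{i,j}|) 𝟙{i ∈ S}`: each `𝔼Zᵢ ≤ 20np e^{−10np}`, and with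
probability at least `1 − e^{−5np}`, `∑ᵢ Zᵢ ≤ 20n²p e^{−5np}`. -/
theorem truncated_degree_bound (n : ℕ) (hn : 1 ≤ n)
    {Ω : Type*} [MeasureSpace Ω] [IsProbabilityMeasure (ℙ : Measure Ω)]
    (A : Ω → Fin n → Fin n → ℝ)
    (hmeas : ∀ i j, Measurable fun ω => A ω i j)
    (hsymm : ∀ ω i j, A ω i j = A ω j i)
    (hdiag : ∀ ω i, A ω i i = 0)
    (hbin : ∀ ω i j, A ω i j = 0 ∨ A ω i j = 1)
    (hindep : iIndepFun
      (fun (ij : {q : Fin n × Fin n // q.1 < q.2}) ω => A ω ij.1.1 ij.1.2) ℙ)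
    (p : ℝ) (hp0 : 0 < p) (hp : ∀ i j, (∫ ω, A ω i j) ≤ p)
    (Zf : Ω → Fin n → ℝ)
    (hZf : ∀ ω i, Zf ω i = (∑ j, |A ω i j - ∫ ω', A ω' i j|) *
      (if 20 * (n : ℝ) * p ≤ ∑ j, A ω i j then 1 else 0)) :
    (∀ i, (∫ ω, Zf ω i) ≤ 20 * n * p * Real.exp (-10 * n * p)) ∧
    ENNReal.ofReal (1 - Real.exp (-5 * n * p)) ≤
      ℙ {ω | ∑ i, Zf ω i ≤ 20 * (n : ℝ) ^ 2 * p * Real.exp (-5 * n * p)} := by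
  classical
  have hn1 : (1:ℝ) ≤ n := by exact_mod_cast hn
  set m : ℝ := (n : ℝ) * p with hmdef
  have hm0 : 0 < m := by positivity
  have hA0 : ∀ ω i j, 0 ≤ A ω i j := by
    intro ω i j; rcases hbin ω i j with h | h <;> simp [h]
  have hA1 : ∀ ω i j, A ω i j ≤ 1 := by
    intro ω i j; rcases hbin ω i j with h | h <;> simp [h]
  have hbint : ∀ (f : Ω → ℝ) (C : ℝ), Measurable f → (∀ ω, |f ω| ≤ C) →
      Integrable f ℙ := by
    intro f C hf hb
    exact (integrable_const C).mono' hf.aestronglyMeasurable (ae_of_all _ (by simpa using hb))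
  have hAint : ∀ i j, Integrable (fun ω => A ω i j) ℙ :=
    fun i j => hbint _ 1 (hmeas i j) (fun ω => abs_le.mpr ⟨by linarith [hA0 ω i j], hA1 ω i j⟩)
  have hμ0 : ∀ i j, 0 ≤ ∫ ω, A ω i j := fun i j => integral_nonneg (fun ω => hA0 ω i j)
  have hXmeas : ∀ i, Measurable (fun ω => ∑ j, A ω i j) :=
    fun i => Finset.measurable_sum _ (fun j _ => hmeas i j)
  have hX0 : ∀ ω i, 0 ≤ ∑ j, A ω i j :=
    fun ω i => Finset.sum_nonneg (fun j _ => hA0 ω i j)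
  have hXn : ∀ ω i, ∑ j, A ω i j ≤ n := by
    intro ω i
    calc ∑ j, A ω i j ≤ ∑ _j : Fin n, (1:ℝ) :=
          Finset.sum_le_sum (fun j _ => hA1 ω i j)
      _ = n := by simp
  have hμsum : ∀ i, ∑ j, (∫ ω, A ω i j) ≤ m := by
    intro i
    calc ∑ j, (∫ ω, A ω i j) ≤ ∑ _j : Fin n, p :=
          Finset.sum_le_sum (fun j _ => hp i j)
      _ = m := by simp [hmdef, mul_comm]
  -- the sum of |A - 𝔼A| is between 0 and X + m
  have hT0 : ∀ ω i, 0 ≤ ∑ j, |A ω i j - ∫ ω', A ω' i j| :=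
    fun ω i => Finset.sum_nonneg (fun j _ => abs_nonneg _)
  have hTle : ∀ ω i, (∑ j, |A ω i j - ∫ ω', A ω' i j|) ≤ (∑ j, A ω i j) + m := by
    intro ω i
    calc (∑ j, |A ω i j - ∫ ω', A ω' i j|)
        ≤ ∑ j, (A ω i j + ∫ ω', A ω' i j) := by
          refine Finset.sum_le_sum (fun j _ => ?_)
          calc |A ω i j - ∫ ω', A ω' i j| ≤ |A ω i j| + |∫ ω', A ω' i j| := abs_sub _ _
            _ = A ω i j + ∫ ω', A ω' i j := by
                rw [abs_of_nonneg (hA0 ω i j), abs_of_nonneg (hμ0 i j)]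
      _ = (∑ j, A ω i j) + ∑ j, (∫ ω', A ω' i j) := Finset.sum_add_distrib
      _ ≤ (∑ j, A ω i j) + m := by linarith [hμsum i]
  -- measurability and bounds for Z
  have hZeq : ∀ i, (fun ω => Zf ω i) = fun ω => (∑ j, |A ω i j - ∫ ω', A ω' i j|) *
      (if 20 * (n : ℝ) * p ≤ ∑ j, A ω i j then 1 else 0) :=
    fun i => funext (fun ω => hZf ω i)
  have hZmeas : ∀ i, Measurable (fun ω => Zf ω i) := by
    intro i
    rw [hZeq i]
    refine Measurable.mul (Finset.measurable_sum _ (fun j _ => ((hmeas i j).sub measurable_const).abs)) ?_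
    exact Measurable.ite (measurableSet_le measurable_const (hXmeas i)) measurable_const
      measurable_const
  have hZ0 : ∀ ω i, 0 ≤ Zf ω i := by
    intro ω i
    rw [hZf ω i]
    have := hT0 ω i
    split_ifs <;> simp <;> linarith
  have hZle : ∀ ω i, Zf ω i ≤ (n:ℝ) + m := by
    intro ω i
    rw [hZf ω i]
    have h1 := hT0 ω i
    have h2 := hTle ω i
    have h3 := hXn ω i
    split_ifs <;> simp <;> nlinarith
  have hZint : ∀ i, Integrable (fun ω => Zf ω i) ℙ := by
    intro i
    refine hbint _ ((n:ℝ) + m) (hZmeas i) (fun ω => abs_le.mpr ⟨?_, hZle ω i⟩)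
    linarith [hZ0 ω i]
  -- Key MGF bound
  have key : ∀ (t : ℝ), 0 ≤ t → ∀ i : Fin n,
      ∫ ω, Real.exp (t * ∑ j, A ω i j) ≤ Real.exp ((Real.exp t - 1) * m) := by
    intro t ht i
    have het1 : (1:ℝ) ≤ Real.exp t := by
      rw [← Real.exp_zero]; exact Real.exp_le_exp.mpr ht
    set g : {j : Fin n // j ≠ i} → {q : Fin n × Fin n // q.1 < q.2} := fun j =>
      if h : i < j.1 then ⟨(i, j.1), h⟩
      else ⟨(j.1, i), lt_of_le_of_ne (not_lt.mp h) j.2⟩ with hg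
    have hginj : Function.Injective g := by
      intro a b hab
      simp only [hg] at hab
      split_ifs at hab with h1 h2 h2 <;>
        simp only [Subtype.mk.injEq, Prod.mk.injEq] at hab <;>
        first
          | exact Subtype.ext hab.1
          | exact Subtype.ext hab.2
          | exact absurd hab.1 a.2
          | exact absurd hab.2 a.2
          | exact absurd hab.1.symm b.2
          | exact absurd hab.2.symm b.2
    have hYindep : iIndepFun
        (fun (j : {j : Fin n // j ≠ i}) ω => A ω i j.1) ℙ := by
      have h2 := iIndepFun_precomp hindep hginj
      have heq : (fun (j : {j : Fin n // j ≠ i}) ω => A ω i j.1) =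
          fun j => (fun (ij : {q : Fin n × Fin n // q.1 < q.2}) ω => A ω ij.1.1 ij.1.2) (g j) := by
        funext j
        simp only [hg]
        split_ifs with h
        · rfl
        · funext ω; exact hsymm ω i j.1
      rw [heq]
      exact h2
    have hsum_eq : ∀ ω, (∑ (j : {j : Fin n // j ≠ i}), A ω i j.1) = ∑ j, A ω i j := by
      intro ω
      rw [← Finset.sum_erase Finset.univ (hdiag ω i),
        Finset.sum_subtype (p := fun j => j ≠ i) (Finset.univ.erase i)
          (by intro x; simp [Finset.mem_erase]) (fun j => A ω i j)]
    have hmgf := hYindep.mgf_sum (fun j => hmeas i j.1) Finset.univ (t := t)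
    have hlhs : mgf (∑ j : {j : Fin n // j ≠ i}, fun ω => A ω i j.1) ℙ t
        = ∫ ω, Real.exp (t * ∑ j, A ω i j) := by
      unfold mgf
      refine integral_congr_ae (ae_of_all _ (fun ω => ?_))
      simp only [Finset.sum_apply]
      rw [hsum_eq ω]
    have hfac : ∀ j : {j : Fin n // j ≠ i},
        mgf (fun ω => A ω i j.1) ℙ t ≤ Real.exp ((Real.exp t - 1) * p) := by
      intro j
      have hpt : ∀ ω, Real.exp (t * A ω i j.1) = 1 + (Real.exp t - 1) * A ω i j.1 := by
        intro ω
        rcases hbin ω i j.1 with h | h <;> simp [h]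
      have : mgf (fun ω => A ω i j.1) ℙ t = 1 + (Real.exp t - 1) * ∫ ω, A ω i j.1 := by
        unfold mgf
        rw [integral_congr_ae (ae_of_all _ hpt), integral_add (integrable_const 1)
          ((hAint i j.1).const_mul _), integral_const_mul]
        simp
      rw [this]
      have h1 : (Real.exp t - 1) * (∫ ω, A ω i j.1) ≤ (Real.exp t - 1) * p :=
        mul_le_mul_of_nonneg_left (hp i j.1) (by linarith)
      calc 1 + (Real.exp t - 1) * ∫ ω, A ω i j.1 ≤ 1 + (Real.exp t - 1) * p := by linarith
        _ ≤ Real.exp ((Real.exp t - 1) * p) := by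
            have := Real.add_one_le_exp ((Real.exp t - 1) * p)
            linarith
    calc ∫ ω, Real.exp (t * ∑ j, A ω i j)
        = ∏ j : {j : Fin n // j ≠ i}, mgf (fun ω => A ω i j.1) ℙ t := by
          rw [← hlhs, hmgf]
      _ ≤ ∏ _j : {j : Fin n // j ≠ i}, Real.exp ((Real.exp t - 1) * p) :=
          Finset.prod_le_prod (fun j _ => mgf_nonneg) (fun j _ => hfac j)
      _ = Real.exp ((Real.exp t - 1) * p) ^ (Fintype.card {j : Fin n // j ≠ i}) := by
          rw [Finset.prod_const, Finset.card_univ]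
      _ ≤ Real.exp ((Real.exp t - 1) * m) := by
          rw [← Real.exp_nat_mul]
          refine Real.exp_le_exp.mpr ?_
          have hcard : (Fintype.card {j : Fin n // j ≠ i} : ℝ) ≤ n := by
            have h := Fintype.card_subtype_le (fun j : Fin n => j ≠ i)
            rw [Fintype.card_fin] at h
            exact_mod_cast h
          have h1 : 0 ≤ Real.exp t - 1 := by linarith
          have h2 : (0:ℝ) ≤ (Fintype.card {j : Fin n // j ≠ i} : ℝ) := by positivity
          calc (Fintype.card {j : Fin n // j ≠ i} : ℝ) * ((Real.exp t - 1) * p)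
              ≤ (n:ℝ) * ((Real.exp t - 1) * p) :=
                mul_le_mul_of_nonneg_right hcard (by positivity)
            _ = (Real.exp t - 1) * m := by rw [hmdef]; ring
  -- numeric facts
  have he1 : Real.exp 1 < 2.7182818286 := Real.exp_one_lt_d9
  have he2 : 2.7182818283 < Real.exp 1 := Real.exp_one_gt_d9
  have hexp_tenth : Real.exp (1/10 : ℝ) ≤ 10/9 := by
    have h := Real.add_one_le_exp (-(1/10) : ℝ)
    have h3 : Real.exp (1/10 : ℝ) * Real.exp (-(1/10) : ℝ) = 1 := by
      rw [← Real.exp_add]; norm_num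
    nlinarith [Real.exp_pos ((1:ℝ)/10)]
  have he11 : Real.exp (11/10 : ℝ) ≤ 3.1 := by
    have : Real.exp (11/10 : ℝ) = Real.exp 1 * Real.exp (1/10) := by
      rw [← Real.exp_add]; norm_num
    rw [this]
    nlinarith [Real.exp_pos (1/10:ℝ), hexp_tenth]
  -- Part 1
  have part1 : ∀ i, (∫ ω, Zf ω i) ≤ 20 * m * Real.exp (-(10 * m)) := by
    intro i
    by_cases hsm : m ≤ 1/5
    · -- small m case
      have hZptw : ∀ ω, Zf ω i ≤ (∑ j, A ω i j) + m := by
        intro ω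
        rw [hZf ω i]
        have h1 := hT0 ω i
        have h2 := hTle ω i
        have h3 := hX0 ω i
        split_ifs <;> simp <;> nlinarith
      have hint : Integrable (fun ω => (∑ j, A ω i j) + m) ℙ :=
        ((integrable_finset_sum _ (fun j _ => hAint i j)).add (integrable_const m))
      have h1 : (∫ ω, Zf ω i) ≤ ∫ ω, ((∑ j, A ω i j) + m) :=
        integral_mono (hZint i) hint hZptw
      have h2 : (∫ ω, ((∑ j, A ω i j) + m)) = (∑ j, ∫ ω, A ω i j) + m := by
        rw [integral_add (integrable_finset_sum _ (fun j _ => hAint i j)) (integrable_const m),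
          integral_finset_sum _ (fun j _ => hAint i j)]
        simp
      have h3 : (∫ ω, Zf ω i) ≤ 2 * m := by
        rw [h2] at h1
        linarith [hμsum i]
      -- 2m ≤ 20 m exp(-10m), since exp(10m) ≤ exp 2 < 10
      have h4 : Real.exp (10 * m) ≤ Real.exp 2 := Real.exp_le_exp.mpr (by linarith)
      have h5 : Real.exp 2 < 10 := by
        have : Real.exp 2 = Real.exp 1 * Real.exp 1 := by
          rw [← Real.exp_add]; norm_num
        nlinarith
      have h6 : (1:ℝ)/10 ≤ Real.exp (-(10 * m)) := by
        rw [Real.exp_neg, le_inv_comm₀ (by norm_num) (Real.exp_pos _)]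
        linarith
      calc (∫ ω, Zf ω i) ≤ 2 * m := h3
        _ ≤ 20 * m * Real.exp (-(10 * m)) := by nlinarith
    · -- large m case
      push_neg at hsm
      set a : ℝ := 20 * m with hadef
      have haeq : 20 * (n:ℝ) * p = a := by rw [hadef, hmdef]; ring
      have hZptw : ∀ ω, Zf ω i ≤
          10 * Real.exp ((11/10) * (∑ j, A ω i j) - (1 + a)) +
          m * Real.exp ((∑ j, A ω i j) - a) := by
        intro ω
        rw [hZf ω i, haeq]
        set X := ∑ j, A ω i j with hXdef
        have h1 := hT0 ω i
        have h2 := hTle ω i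
        have h3 := hX0 ω i
        split_ifs with hind
        · rw [mul_one]
          have hXa : a ≤ X := hind
          have e1 : X / 10 ≤ Real.exp (X/10 - 1) := by
            have := Real.add_one_le_exp (X/10 - 1)
            linarith
          have e2 : (1:ℝ) ≤ Real.exp (X - a) := by
            rw [← Real.exp_zero]
            exact Real.exp_le_exp.mpr (by linarith)
          have e3 : X ≤ 10 * Real.exp (X/10 - 1) * Real.exp (X - a) := by
            have e3a : X ≤ 10 * Real.exp (X/10 - 1) := by linarith
            have e3b : 0 ≤ 10 * Real.exp (X/10 - 1) := by positivity
            calc X ≤ 10 * Real.exp (X/10 - 1) := e3a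
              _ ≤ 10 * Real.exp (X/10 - 1) * Real.exp (X - a) :=
                  le_mul_of_one_le_right e3b e2
          have e4 : 10 * Real.exp (X/10 - 1) * Real.exp (X - a)
              = 10 * Real.exp ((11/10) * X - (1 + a)) := by
            rw [mul_assoc, ← Real.exp_add]
            ring_nf
          have e5 : m ≤ m * Real.exp (X - a) := le_mul_of_one_le_right hm0.le e2
          calc (∑ j, |A ω i j - ∫ ω', A ω' i j|) ≤ X + m := h2
            _ ≤ 10 * Real.exp ((11/10) * X - (1 + a)) + m * Real.exp (X - a) := by
                rw [← e4]; linarith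
        · rw [mul_zero]
          positivity
      -- integrate the pointwise bound
      have hint1 : Integrable (fun ω => Real.exp ((11/10) * (∑ j, A ω i j))) ℙ := by
        refine hbint _ (Real.exp ((11/10) * n)) ((hXmeas i).const_mul _).exp (fun ω => ?_)
        rw [abs_of_pos (Real.exp_pos _)]
        exact Real.exp_le_exp.mpr (by nlinarith [hXn ω i])
      have hint2 : Integrable (fun ω => Real.exp ((∑ j, A ω i j))) ℙ := by
        refine hbint _ (Real.exp n) ((hXmeas i)).exp (fun ω => ?_)
        rw [abs_of_pos (Real.exp_pos _)]
        exact Real.exp_le_exp.mpr (hXn ω i)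
      have ha0 : 0 < a := by rw [hadef]; positivity
      have hintB1 : Integrable (fun ω =>
          Real.exp ((11/10) * (∑ j, A ω i j) - (1 + a))) ℙ := by
        refine hbint _ (Real.exp ((11/10) * n))
          (((hXmeas i).const_mul _).sub_const _).exp (fun ω => ?_)
        rw [abs_of_pos (Real.exp_pos _)]
        refine Real.exp_le_exp.mpr ?_
        have := hXn ω i
        nlinarith
      have hintB2 : Integrable (fun ω =>
          Real.exp ((∑ j, A ω i j) - a)) ℙ := by
        refine hbint _ (Real.exp n) ((hXmeas i).sub_const _).exp (fun ω => ?_)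
        rw [abs_of_pos (Real.exp_pos _)]
        refine Real.exp_le_exp.mpr ?_
        have := hXn ω i
        linarith
      have hintB : Integrable (fun ω =>
          10 * Real.exp ((11/10) * (∑ j, A ω i j) - (1 + a)) +
          m * Real.exp ((∑ j, A ω i j) - a)) ℙ :=
        (hintB1.const_mul 10).add (hintB2.const_mul m)
      have h1 : (∫ ω, Zf ω i) ≤ ∫ ω, (10 * Real.exp ((11/10) * (∑ j, A ω i j) - (1 + a)) +
          m * Real.exp ((∑ j, A ω i j) - a)) :=
        integral_mono (hZint i) hintB hZptw
      have key1 := key (11/10) (by norm_num) i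
      have key2 := key 1 (by norm_num) i
      have hsplit : (∫ ω, (10 * Real.exp ((11/10) * (∑ j, A ω i j) - (1 + a)) +
          m * Real.exp ((∑ j, A ω i j) - a)))
          = 10 * Real.exp (-(1+a)) * (∫ ω, Real.exp ((11/10) * (∑ j, A ω i j))) +
            m * Real.exp (-a) * (∫ ω, Real.exp ((∑ j, A ω i j))) := by
        have b1 : ∀ ω, 10 * Real.exp ((11/10) * (∑ j, A ω i j) - (1 + a)) +
            m * Real.exp ((∑ j, A ω i j) - a)
            = (10 * Real.exp (-(1+a))) * Real.exp ((11/10) * (∑ j, A ω i j)) +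
              (m * Real.exp (-a)) * Real.exp ((∑ j, A ω i j)) := by
          intro ω
          rw [show (11:ℝ)/10 * (∑ j, A ω i j) - (1 + a)
              = (-(1+a)) + (11/10) * (∑ j, A ω i j) by ring,
            show (∑ j, A ω i j) - a = (-a) + (∑ j, A ω i j) by ring,
            Real.exp_add, Real.exp_add]
          ring
        rw [integral_congr_ae (ae_of_all _ b1),
          integral_add (hint1.const_mul _) (hint2.const_mul _),
          integral_const_mul, integral_const_mul]
      have hexp1 : (∫ ω, Real.exp ((11/10) * (∑ j, A ω i j)))
          ≤ Real.exp ((Real.exp (11/10) - 1) * m) := key1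
      have hexp2 : (∫ ω, Real.exp ((∑ j, A ω i j)))
          ≤ Real.exp ((Real.exp 1 - 1) * m) := by
        have : ∀ ω, Real.exp ((∑ j, A ω i j)) = Real.exp (1 * (∑ j, A ω i j)) := by
          intro ω; rw [one_mul]
        rw [integral_congr_ae (ae_of_all _ this)]
        exact key2
      -- combine
      have hfinal : 10 * Real.exp (-(1+a)) * Real.exp ((Real.exp (11/10) - 1) * m) +
          m * Real.exp (-a) * Real.exp ((Real.exp 1 - 1) * m)
          ≤ 20 * m * Real.exp (-(10*m)) := by
        have t1 : 10 * Real.exp (-(1+a)) * Real.exp ((Real.exp (11/10) - 1) * m)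
            = 10 * Real.exp (-1) * Real.exp ((Real.exp (11/10) - 21) * m) := by
          rw [mul_assoc, mul_assoc, ← Real.exp_add, ← Real.exp_add, hadef]
          ring_nf
        have t2 : m * Real.exp (-a) * Real.exp ((Real.exp 1 - 1) * m)
            = m * Real.exp ((Real.exp 1 - 21) * m) := by
          rw [mul_assoc, ← Real.exp_add, hadef]
          ring_nf
        rw [t1, t2]
        have u1 : Real.exp ((Real.exp (11/10) - 21) * m) ≤ Real.exp (-(10*m)) := by
          refine Real.exp_le_exp.mpr ?_
          nlinarith
        have u2 : Real.exp ((Real.exp 1 - 21) * m) ≤ Real.exp (-(10*m)) := by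
          refine Real.exp_le_exp.mpr ?_
          nlinarith
        have u3 : 10 * Real.exp (-1) ≤ 19 * m := by
          have : Real.exp (-1) = (Real.exp 1)⁻¹ := Real.exp_neg 1
          rw [this]
          rw [mul_inv_le_iff₀ (Real.exp_pos 1)]
          nlinarith
        have hep := Real.exp_pos (-(10*m))
        nlinarith [Real.exp_pos ((Real.exp (11/10) - 21) * m),
          Real.exp_pos ((Real.exp 1 - 21) * m)]
      have step : 10 * Real.exp (-(1+a)) * (∫ ω, Real.exp ((11/10) * (∑ j, A ω i j))) +
            m * Real.exp (-a) * (∫ ω, Real.exp ((∑ j, A ω i j)))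
          ≤ 10 * Real.exp (-(1+a)) * Real.exp ((Real.exp (11/10) - 1) * m) +
            m * Real.exp (-a) * Real.exp ((Real.exp 1 - 1) * m) := by
        have p1 : (0:ℝ) ≤ 10 * Real.exp (-(1+a)) := by positivity
        have p2 : (0:ℝ) ≤ m * Real.exp (-a) := by positivity
        nlinarith
      calc (∫ ω, Zf ω i) ≤ _ := h1
        _ = _ := hsplit
        _ ≤ _ := step
        _ ≤ 20 * m * Real.exp (-(10*m)) := hfinal
  have hneg10 : (-10 : ℝ) * n * p = -(10 * m) := by rw [hmdef]; ring
  have hneg5 : (-5 : ℝ) * n * p = -(5 * m) := by rw [hmdef]; ring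
  constructor
  · intro i
    rw [hneg10, show (20:ℝ) * n * p = 20 * m by rw [hmdef]; ring]
    exact part1 i
  · -- Part 2: Markov
    set T : ℝ := 20 * (n:ℝ)^2 * p * Real.exp (-5 * n * p) with hTdef
    have hT0' : 0 < T := by positivity
    set gS : Ω → ℝ := fun ω => ∑ i, Zf ω i with hgS
    have hgmeas : Measurable gS := Finset.measurable_sum _ (fun i _ => hZmeas i)
    have hgint : Integrable gS ℙ := integrable_finset_sum _ (fun i _ => hZint i)
    have hgnonneg : 0 ≤ᵐ[ℙ] gS :=
      ae_of_all _ (fun ω => Finset.sum_nonneg (fun i _ => hZ0 ω i))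
    have hEg : (∫ ω, gS ω) ≤ 20 * (n:ℝ)^2 * p * Real.exp (-(10 * m)) := by
      rw [hgS]
      rw [integral_finset_sum _ (fun i _ => hZint i)]
      calc ∑ i, ∫ ω, Zf ω i ≤ ∑ _i : Fin n, 20 * m * Real.exp (-(10*m)) :=
            Finset.sum_le_sum (fun i _ => part1 i)
        _ = (n:ℝ) * (20 * m * Real.exp (-(10*m))) := by simp [mul_comm]
        _ = 20 * (n:ℝ)^2 * p * Real.exp (-(10 * m)) := by rw [hmdef]; ring
    have hmarkov := mul_meas_ge_le_integral_of_nonneg hgnonneg hgint T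
    have hub : (ℙ {ω | T ≤ gS ω}).toReal ≤ Real.exp (-(5 * m)) := by
      have h2 : T * (ℙ {ω | T ≤ gS ω}).toReal ≤ 20 * (n:ℝ)^2 * p * Real.exp (-(10 * m)) :=
        le_trans hmarkov hEg
      have h3 : 20 * (n:ℝ)^2 * p * Real.exp (-(10 * m)) = T * Real.exp (-(5 * m)) := by
        rw [hTdef, hneg5, show (-(10*m) : ℝ) = -(5*m) + -(5*m) by ring, Real.exp_add]
        ring
      rw [h3] at h2
      exact le_of_mul_le_mul_left h2 hT0'
    have hcompl : ℙ {ω | gS ω ≤ T}ᶜ ≤ ℙ {ω | T ≤ gS ω} := by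
      refine measure_mono ?_
      intro ω hω
      simp only [Set.mem_compl_iff, Set.mem_setOf_eq, not_le] at hω ⊢
      exact hω.le
    have hmbl : MeasurableSet {ω | gS ω ≤ T} := measurableSet_le hgmeas measurable_const
    refine ENNReal.ofReal_le_of_le_toReal ?_
    have hc : (ℙ {ω | gS ω ≤ T}ᶜ).toReal ≤ Real.exp (-(5 * m)) :=
      le_trans (ENNReal.toReal_mono (measure_ne_top _ _) hcompl) hub
    have heq : (ℙ {ω | gS ω ≤ T}).toReal = 1 - (ℙ {ω | gS ω ≤ T}ᶜ).toReal := by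
      rw [prob_compl_eq_one_sub hmbl, ENNReal.toReal_sub_of_le (prob_le_one) (by simp)]
      simp
    rw [show {ω | ∑ i, Zf ω i ≤ 20 * (n : ℝ) ^ 2 * p * Real.exp (-5 * n * p)}
      = {ω | gS ω ≤ T} from rfl, heq, hneg5]
    linarith
end
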